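/- Let ε > 0, let c_q be the largest cost of any item used in an optimal solution of the MEDR problem, and choose k* with 2^{k*−1} < c_q ≤ 2^{k*}. Set a = ε·2^{k*}/(n+1). If ALG is the cost of a solution that is optimal for the instance with all costs (including the BES cost term) rounded down by ⌊·/a⌋ among items of cost at most 2^{k*}, then ALG ≤ OPT + ε·2^{k*} ≤ (1 + 2ε)·OPT, where OPT is the true optimal social cost. -/
import Mathlib


/-- FPTAS key inequality: at the correct scale `k*` (with `2^{k*-1} < c_q ≤ 2^{k*}` for the
largest cost `c_q` used in an optimal solution) and rounding parameter `a = ε·2^{k*}/(n+1)`,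
the true cost of a solution that is optimal for the rounded instance restricted to items of
cost at most `2^{k*}` satisfies `ALG ≤ OPT + ε·2^{k*} ≤ (1+2ε)·OPT`. -/
theorem stmt_6 (n : ℕ) (s c : Fin n → ℝ) (hs : ∀ i, 0 ≤ s i) (hc : ∀ i, 0 ≤ c i)
    (α γ W ε : ℝ) (hα : 0 < α) (hγ : 0 < γ) (hε : 0 < ε)
    (cost : Finset (Fin n) → ℝ)
    (hcost : ∀ S, cost S = ∑ i ∈ S, c i + α * max (W - γ * ∑ i ∈ S, s i) 0)
    (Sopt : Finset (Fin n)) (hSopt : ∀ S, cost Sopt ≤ cost S)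
    (q : Fin n) (hq : q ∈ Sopt) (hqmax : ∀ i ∈ Sopt, c i ≤ c q)
    (k : ℤ) (hk1 : (2 : ℝ) ^ (k - 1) < c q) (hk2 : c q ≤ (2 : ℝ) ^ k)
    (a : ℝ) (ha : a = ε * (2 : ℝ) ^ k / (n + 1))
    (rcost : Finset (Fin n) → ℝ)
    (hrcost : ∀ S, rcost S = ∑ i ∈ S, ((⌊c i / a⌋ : ℤ) : ℝ) +
      (if γ * ∑ i ∈ S, s i < W
        then ((⌊α * (W - γ * ∑ i ∈ S, s i) / a⌋ : ℤ) : ℝ) else 0))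
    (T : Finset (Fin n)) (hT : T = Finset.univ.filter (fun i => c i ≤ (2 : ℝ) ^ k))
    (Sbar : Finset (Fin n)) (hSbarT : Sbar ⊆ T)
    (hSbar : ∀ S ⊆ T, rcost Sbar ≤ rcost S) :
    cost Sbar ≤ cost Sopt + ε * (2 : ℝ) ^ k ∧
    cost Sopt + ε * (2 : ℝ) ^ k ≤ (1 + 2 * ε) * cost Sopt := by
  have h2k : (0:ℝ) < (2 : ℝ) ^ k := zpow_pos (by norm_num) k
  have hn1 : (0:ℝ) < (n:ℝ) + 1 := by positivity
  have hapos : 0 < a := by rw [ha]; positivity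
  have hflo : ∀ x : ℝ, a * ((⌊x / a⌋ : ℤ) : ℝ) ≤ x := by
    intro x
    have h1 := (le_div_iff₀ hapos).mp (Int.floor_le (x / a))
    linarith [h1]
  have hfhi : ∀ x : ℝ, x ≤ a * ((⌊x / a⌋ : ℤ) : ℝ) + a := by
    intro x
    have h1 := (div_lt_iff₀ hapos).mp (Int.lt_floor_add_one (x / a))
    nlinarith [h1]
  have hlow : ∀ S : Finset (Fin n), a * rcost S ≤ cost S := by
    intro S
    rw [hrcost, hcost, mul_add, Finset.mul_sum]
    apply add_le_add
    · exact Finset.sum_le_sum fun i _ => hflo (c i)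
    · split_ifs with hW
      · calc a * ((⌊α * (W - γ * ∑ i ∈ S, s i) / a⌋ : ℤ) : ℝ)
            ≤ α * (W - γ * ∑ i ∈ S, s i) := hflo _
          _ ≤ α * max (W - γ * ∑ i ∈ S, s i) 0 :=
            mul_le_mul_of_nonneg_left (le_max_left _ _) hα.le
      · rw [mul_zero]; positivity
  have hcardle : ∀ S : Finset (Fin n), (S.card : ℝ) ≤ n := by
    intro S
    exact_mod_cast (Finset.card_le_card (Finset.subset_univ S)).trans_eq
      (by simp)
  have hε2 : a * ((n : ℝ) + 1) = ε * (2 : ℝ) ^ k := by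
    rw [ha]; field_simp
  have hup : ∀ S : Finset (Fin n), cost S ≤ a * rcost S + ε * (2 : ℝ) ^ k := by
    intro S
    have h4 : a * rcost S = (∑ i ∈ S, a * ((⌊c i / a⌋ : ℤ) : ℝ)) +
        a * (if γ * ∑ i ∈ S, s i < W
          then ((⌊α * (W - γ * ∑ i ∈ S, s i) / a⌋ : ℤ) : ℝ) else 0) := by
      rw [hrcost, mul_add]
      congr 1
      exact Finset.mul_sum _ _ _
    rw [hcost, h4, ← hε2]
    have h1 : ∑ i ∈ S, c i ≤ (∑ i ∈ S, a * ((⌊c i / a⌋ : ℤ) : ℝ)) + a * S.card := by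
      calc ∑ i ∈ S, c i ≤ ∑ i ∈ S, (a * ((⌊c i / a⌋ : ℤ) : ℝ) + a) :=
            Finset.sum_le_sum fun i _ => hfhi (c i)
        _ = _ := by rw [Finset.sum_add_distrib, Finset.sum_const, nsmul_eq_mul]; ring
    have h2 : α * max (W - γ * ∑ i ∈ S, s i) 0 ≤
        a * (if γ * ∑ i ∈ S, s i < W
          then ((⌊α * (W - γ * ∑ i ∈ S, s i) / a⌋ : ℤ) : ℝ) else 0) + a := by
      split_ifs with hW
      · have hm : max (W - γ * ∑ i ∈ S, s i) 0 = W - γ * ∑ i ∈ S, s i :=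
          max_eq_left (by linarith)
        rw [hm]
        exact hfhi _
      · have hm : max (W - γ * ∑ i ∈ S, s i) 0 = 0 :=
          max_eq_right (by push_neg at hW; linarith)
        rw [hm, mul_zero, mul_zero]
        linarith
    have h3 : a * (S.card : ℝ) + a ≤ a * ((n : ℝ) + 1) := by
      have := hcardle S
      nlinarith
    linarith
  have hSoptT : Sopt ⊆ T := by
    rw [hT]
    intro i hi
    simp only [Finset.mem_filter, Finset.mem_univ, true_and]
    exact (hqmax i hi).trans hk2
  have hOPT : c q ≤ cost Sopt := by
    rw [hcost]
    have h1 : c q ≤ ∑ i ∈ Sopt, c i := Finset.single_le_sum (fun i _ => hc i) hq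
    have h2 : (0:ℝ) ≤ α * max (W - γ * ∑ i ∈ Sopt, s i) 0 := by positivity
    linarith
  have hr := hSbar Sopt hSoptT
  have main1 : cost Sbar ≤ cost Sopt + ε * (2 : ℝ) ^ k := by
    have h1 := hup Sbar
    have h2 := hlow Sopt
    have h3 : a * rcost Sbar ≤ a * rcost Sopt :=
      mul_le_mul_of_nonneg_left hr hapos.le
    linarith
  refine ⟨main1, ?_⟩
  have hsplit : (2 : ℝ) ^ k = (2 : ℝ) ^ (k - 1) * 2 := by
    rw [← zpow_add_one₀ (by norm_num : (2:ℝ) ≠ 0)]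
    norm_num
  nlinarith [hε.le, hk1, hOPT, mul_le_mul_of_nonneg_left hOPT hε.le]
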